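/- Let E be a real inner product space, let w*, ŵ, ŵ_prev, φ, φ_prev ∈ E, r ∈ ℝ, α, l > 0, and set w̃ = ŵ − w*, ζ = ⟪w̃, φ⟫, e = α⟪ŵ, φ⟫ + r − ⟪ŵ_prev, φ_prev⟫, and w̃' = w̃ − α l e φ. Then (1/l)(‖w̃'‖² − ‖w̃‖²) = −α² ζ² − (1 − α² l ‖φ‖²) e² + (α⟪w*, φ⟫ + r − ⟪ŵ_prev, φ_prev⟫)². -/
import Mathlib


open RealInnerProductSpace

theorem lemma_one_first_difference {E : Type*} [NormedAddCommGroup E]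
    [InnerProductSpace ℝ E]
    (wstar what whatPrev φ φPrev : E) (r α l : ℝ) (hα : 0 < α) (hl : 0 < l)
    (wt ζ e : _) (hwt : wt = what - wstar) (hζ : ζ = ⟪wt, φ⟫)
    (he : e = α * ⟪what, φ⟫ + r - ⟪whatPrev, φPrev⟫)
    (wt' : E) (hstep : wt' = wt - (α * l * e) • φ) :
    (1 / l) * (‖wt'‖ ^ 2 - ‖wt‖ ^ 2) =
      -α ^ 2 * ζ ^ 2 - (1 - α ^ 2 * l * ‖φ‖ ^ 2) * e ^ 2 +
        (α * ⟪wstar, φ⟫ + r - ⟪whatPrev, φPrev⟫) ^ 2 := by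
  have hexp : ‖wt'‖ ^ 2 = ‖wt‖ ^ 2 - 2 * (α * l * e) * ⟪wt, φ⟫
      + (α * l * e) ^ 2 * ‖φ‖ ^ 2 := by
    rw [hstep, @norm_sub_sq_real, real_inner_smul_right, norm_smul, mul_pow,
      Real.norm_eq_abs, sq_abs]
    ring
  have hd : α * ⟪wstar, φ⟫ + r - ⟪whatPrev, φPrev⟫ = e - α * ζ := by
    rw [he, hζ, hwt, inner_sub_left]; ring
  rw [hexp, hd, ← hζ]
  field_simp
  ring
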